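/- Let A_n be the two-generator Artin group with odd exponent n ≥ 3, Δ = (aba⋯)_n, and z = Δ². Let A_n' be the index-two subgroup of even-length words. Then b^{2n} z⁻¹ lies in the commutator subgroup [A_n', A_n']. -/

import Mathlib

/-- The alternating product `x y x y ⋯` of length `n`. -/
def altG {G : Type*} [Monoid G] : ℕ → G → G → G
  | 0, _, _ => 1
  | n + 1, x, y => x * altG n y x

lemma map_altG {M N : Type*} [Monoid M] [Monoid N] (f : M →* N) :
    ∀ (n : ℕ) (x y : M), f (altG n x y) = altG n (f x) (f y)
  | 0, _, _ => by simp [altG]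
  | n + 1, x, y => by simp [altG, map_altG f n]

/-- The braid relation of the two-generator Artin group with exponent `n`. -/
def braidRels (n : ℕ) : Set (FreeGroup Bool) :=
  {altG n (FreeGroup.of true) (FreeGroup.of false) *
    (altG n (FreeGroup.of false) (FreeGroup.of true))⁻¹}

/-- The two-generator Artin group `A_n`. -/
abbrev ArtinTwo (n : ℕ) := PresentedGroup (braidRels n)

/-- The generator `a`. -/
def artinA (n : ℕ) : ArtinTwo n := PresentedGroup.of true

/-- The generator `b`. -/
def artinB (n : ℕ) : ArtinTwo n := PresentedGroup.of false

/-- The Garside element `Δ = (aba⋯)_n`. -/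
def artinDelta (n : ℕ) : ArtinTwo n := altG n (artinA n) (artinB n)

/-- The homomorphism `A_n → ℤ/2` sending both generators to `1`. -/
def toZ2 (n : ℕ) : ArtinTwo n →* Multiplicative (ZMod 2) :=
  PresentedGroup.toGroup (f := fun _ => Multiplicative.ofAdd 1) (by
    intro r hr
    simp only [braidRels, Set.mem_singleton_iff] at hr
    subst hr
    simp [map_altG])

/-- The index-two subgroup `A_n'` of even-length words. -/
def AnPrime (n : ℕ) : Subgroup (ArtinTwo n) := (toZ2 n).ker

/-- Shifting lemma: `a (ba)^k = (ab)^k a`. -/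
lemma shift_pow {G : Type*} [Group G] (a b : G) : ∀ k : ℕ, a * (b * a) ^ k = (a * b) ^ k * a
  | 0 => by simp
  | k + 1 => by
    rw [pow_succ, pow_succ, ← mul_assoc, shift_pow a b k]
    group

lemma altG_odd {G : Type*} [Monoid G] (x y : G) : ∀ k : ℕ, altG (2 * k + 1) x y = (x * y) ^ k * x
  | 0 => by simp [altG]
  | k + 1 => by
    have h : 2 * (k + 1) + 1 = (2 * k + 1) + 2 := by ring
    rw [h]
    show x * (y * altG (2 * k + 1) x y) = _
    rw [altG_odd x y k, pow_succ']
    group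

/-- Abelianized consequence of the two rewritten relations. -/
lemma comm_calc {Q : Type*} [Group Q] (k : ℕ) (x y z : Q)
    (cXZ : Commute x z) (_cXY : Commute x y)
    (h1 : y ^ k * z⁻¹ = (z * x) ^ k) (h2 : (x * z) ^ k * x = y ^ (k + 1)) :
    z ^ (2 * k + 1) = 1 := by
  have hR1 : y ^ k = x ^ k * z ^ (k + 1) := by
    have h : y ^ k = (z * x) ^ k * z := by rw [← h1, inv_mul_cancel_right]
    calc y ^ k = (z * x) ^ k * z := h
      _ = z ^ k * x ^ k * z := by rw [cXZ.symm.mul_pow]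
      _ = x ^ k * z ^ k * z := by rw [(cXZ.symm.pow_pow k k).eq]
      _ = x ^ k * (z ^ k * z) := by rw [mul_assoc]
      _ = x ^ k * z ^ (k + 1) := by rw [← pow_succ]
  have hR2 : y ^ (k + 1) = x ^ (k + 1) * z ^ k := by
    calc y ^ (k + 1) = (x * z) ^ k * x := h2.symm
      _ = x ^ k * z ^ k * x := by rw [cXZ.mul_pow]
      _ = x ^ k * (z ^ k * x) := by rw [mul_assoc]
      _ = x ^ k * (x * z ^ k) := by rw [(cXZ.symm.pow_left k).eq]
      _ = x ^ k * x * z ^ k := by rw [mul_assoc]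
      _ = x ^ (k + 1) * z ^ k := by rw [← pow_succ]
  have e1 : y ^ (k * (k + 1)) = x ^ (k * (k + 1)) * z ^ ((k + 1) * (k + 1)) := by
    rw [pow_mul, hR1, (cXZ.pow_pow k (k + 1)).mul_pow, ← pow_mul, ← pow_mul]
  have e2 : y ^ ((k + 1) * k) = x ^ ((k + 1) * k) * z ^ (k * k) := by
    rw [pow_mul, hR2, (cXZ.pow_pow (k + 1) k).mul_pow, ← pow_mul, ← pow_mul]
  have e3 : x ^ (k * (k + 1)) * z ^ ((k + 1) * (k + 1)) = x ^ (k * (k + 1)) * z ^ (k * k) := by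
    rw [← e1, Nat.mul_comm k (k + 1)]
    exact e2
  have e4 : z ^ ((k + 1) * (k + 1)) = z ^ (k * k) := mul_left_cancel e3
  have h5 : z ^ (k * k) * z ^ (2 * k + 1) = z ^ (k * k) * 1 := by
    rw [mul_one, ← pow_add, ← e4]
    congr 1
    ring
  exact mul_left_cancel h5

/-- The key abstract computation in the quotient group. -/
lemma key_comp {Q : Type*} [Group Q] (k : ℕ) (A B : Q)
    (rel : (A * B) ^ k * A = (B * A) ^ k * B)
    (cXY : Commute (A ^ 2) (A * B))
    (cXZ : Commute (A ^ 2) (B * A⁻¹))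
    (cYZ : Commute (A * B) (B * A⁻¹)) :
    B ^ (2 * (2 * k + 1)) = ((A * B) ^ k * A) ^ 2 := by
  have c1 : (B * A⁻¹) * A ^ 2 = B * A := by rw [pow_two, mul_assoc, inv_mul_cancel_left]
  have c2 : (B * A⁻¹)⁻¹ = A * B⁻¹ := by rw [mul_inv_rev, inv_inv]
  have c3 : (A ^ 2) * (B * A⁻¹) = A * (A * B) * A⁻¹ := by
    rw [pow_two]; simp only [mul_assoc]
  have q1 : (A * B) ^ k * (B * A⁻¹)⁻¹ = ((B * A⁻¹) * A ^ 2) ^ k := by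
    rw [c1, c2]
    calc (A * B) ^ k * (A * B⁻¹) = (A * B) ^ k * A * B⁻¹ := by rw [mul_assoc]
      _ = (B * A) ^ k * B * B⁻¹ := by rw [rel]
      _ = (B * A) ^ k := by rw [mul_inv_cancel_right]
  have q2 : ((A ^ 2) * (B * A⁻¹)) ^ k * A ^ 2 = (A * B) ^ (k + 1) := by
    rw [c3, conj_pow, pow_two]
    calc A * (A * B) ^ k * A⁻¹ * (A * A)
        = A * (A * B) ^ k * (A⁻¹ * (A * A)) := by rw [mul_assoc]
      _ = A * (A * B) ^ k * A := by rw [inv_mul_cancel_left]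
      _ = A * ((A * B) ^ k * A) := by rw [mul_assoc]
      _ = A * ((B * A) ^ k * B) := by rw [rel]
      _ = A * (B * A) ^ k * B := by rw [mul_assoc]
      _ = (A * B) ^ k * A * B := by rw [shift_pow]
      _ = (A * B) ^ (k + 1) := by rw [mul_assoc, ← pow_succ]
  have q3 : ((A * B) ^ k * A) ^ 2 = (A * B) ^ (2 * k + 1) := by
    calc ((A * B) ^ k * A) ^ 2 = ((A * B) ^ k * A) * ((B * A) ^ k * B) := by rw [pow_two, rel]
      _ = (A * B) ^ k * (A * (B * A) ^ k) * B := by simp only [mul_assoc]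
      _ = (A * B) ^ k * ((A * B) ^ k * A) * B := by rw [shift_pow]
      _ = (A * B) ^ k * (A * B) ^ k * (A * B) := by simp only [mul_assoc]
      _ = (A * B) ^ (k + k) * (A * B) := by rw [pow_add]
      _ = (A * B) ^ (k + k + 1) := by rw [← pow_succ]
      _ = (A * B) ^ (2 * k + 1) := by ring_nf
  have qB : (B * A⁻¹) * (A * B) = B ^ 2 := by
    rw [pow_two, mul_assoc, inv_mul_cancel_left]
  have hz : (B * A⁻¹) ^ (2 * k + 1) = 1 :=
    comm_calc k (A ^ 2) (A * B) (B * A⁻¹) cXZ cXY q1 q2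
  rw [q3]
  calc B ^ (2 * (2 * k + 1)) = (B ^ 2) ^ (2 * k + 1) := by rw [← pow_mul]
    _ = ((B * A⁻¹) * (A * B)) ^ (2 * k + 1) := by rw [qB]
    _ = (B * A⁻¹) ^ (2 * k + 1) * (A * B) ^ (2 * k + 1) := cYZ.symm.mul_pow _
    _ = (A * B) ^ (2 * k + 1) := by rw [hz, one_mul]

lemma artin_rel (n : ℕ) :
    altG n (artinA n) (artinB n) = altG n (artinB n) (artinA n) := by
  have h1 : PresentedGroup.mk (braidRels n)
      (altG n (FreeGroup.of true) (FreeGroup.of false) *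
        (altG n (FreeGroup.of false) (FreeGroup.of true))⁻¹) = 1 := by
    exact (QuotientGroup.eq_one_iff _).mpr (Subgroup.subset_normalClosure (by simp [braidRels]))
  rw [map_mul, map_inv, mul_inv_eq_one] at h1
  rw [map_altG, map_altG] at h1
  exact h1

lemma toZ2_a (n : ℕ) : toZ2 n (artinA n) = Multiplicative.ofAdd 1 :=
  PresentedGroup.toGroup.of _

lemma toZ2_b (n : ℕ) : toZ2 n (artinB n) = Multiplicative.ofAdd 1 :=
  PresentedGroup.toGroup.of _

open scoped commutatorElement

/-- for odd `n`, with `z = Δ²`, the element `b^{2n} z⁻¹` lies in the commutator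
subgroup of the even-length index-two subgroup `A_n'`. -/
theorem artin_odd_b2n_in_commutator (n : ℕ) (hodd : Odd n) (hn : 3 ≤ n) :
    (artinB n) ^ (2 * n) * ((artinDelta n) ^ 2)⁻¹ ∈ ⁅AnPrime n, AnPrime n⁆ := by
  obtain ⟨k, hk⟩ := hodd
  subst hk
  set m := 2 * k + 1 with hm
  haveI hnorm : (AnPrime m).Normal := MonoidHom.normal_ker (toZ2 m)
  haveI : (⁅AnPrime m, AnPrime m⁆ : Subgroup (ArtinTwo m)).Normal :=
    Subgroup.commutator_normal _ _
  rw [← QuotientGroup.eq_one_iff]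
  have key_comm : ∀ u v : ArtinTwo m, u ∈ AnPrime m → v ∈ AnPrime m →
      Commute (QuotientGroup.mk' ⁅AnPrime m, AnPrime m⁆ u)
        (QuotientGroup.mk' ⁅AnPrime m, AnPrime m⁆ v) := by
    intro u v hu hv
    rw [← commutatorElement_eq_one_iff_commute]
    have hmem : ⁅u, v⁆ ∈ ⁅AnPrime m, AnPrime m⁆ := Subgroup.commutator_mem_commutator hu hv
    have h := (QuotientGroup.eq_one_iff (⁅u, v⁆ : ArtinTwo m)).mpr hmem
    simpa [commutatorElement_def] using h
  have hmemab : artinA m * artinB m ∈ AnPrime m := by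
    have : toZ2 m (artinA m * artinB m) = 1 := by
      rw [map_mul, toZ2_a, toZ2_b]; decide
    exact this
  have hmemaa : artinA m ^ 2 ∈ AnPrime m := by
    have : toZ2 m (artinA m ^ 2) = 1 := by
      rw [map_pow, toZ2_a]; decide
    exact this
  have hmemba : artinB m * (artinA m)⁻¹ ∈ AnPrime m := by
    have : toZ2 m (artinB m * (artinA m)⁻¹) = 1 := by
      rw [map_mul, map_inv, toZ2_a, toZ2_b]; decide
    exact this
  set φ := QuotientGroup.mk' (⁅AnPrime m, AnPrime m⁆ : Subgroup (ArtinTwo m)) with hφ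
  set A := φ (artinA m) with hA
  set B := φ (artinB m) with hB
  have hrel := artin_rel m
  rw [hm, altG_odd, altG_odd] at hrel
  have hrelQ : (A * B) ^ k * A = (B * A) ^ k * B := by
    have := congrArg φ hrel
    simpa only [map_mul, map_pow, hA, hB] using this
  have C1 : Commute (A ^ 2) (A * B) := by
    have := key_comm _ _ hmemaa hmemab
    simpa only [map_mul, map_pow, hA, hB] using this
  have C2 : Commute (A ^ 2) (B * A⁻¹) := by
    have := key_comm _ _ hmemaa hmemba
    simpa only [map_mul, map_pow, map_inv, hA, hB] using this
  have C3 : Commute (A * B) (B * A⁻¹) := by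
    have := key_comm _ _ hmemab hmemba
    simpa only [map_mul, map_inv, hA, hB] using this
  have hmain : B ^ (2 * (2 * k + 1)) = ((A * B) ^ k * A) ^ 2 :=
    key_comp k A B hrelQ C1 C2 C3
  have hdelta : φ (artinDelta m) = (A * B) ^ k * A := by
    show φ (altG (2 * k + 1) (artinA m) (artinB m)) = (A * B) ^ k * A
    rw [altG_odd]
    simp only [map_mul, map_pow, hA, hB]
  show φ ((artinB m) ^ (2 * m) * ((artinDelta m) ^ 2)⁻¹) = 1
  rw [map_mul, map_inv, map_pow, map_pow, hdelta, ← hB]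
  show B ^ (2 * (2 * k + 1)) * (((A * B) ^ k * A) ^ 2)⁻¹ = 1
  rw [← hmain, mul_inv_cancel]
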